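/- Let f : ℝ → ℝ be real-analytic. If ∫₀^{π/2} f(θ·sin²s) ds = 0 for every θ ∈ ℝ, then f(θ) = 0 for all θ ∈ ℝ (i.e., the operator A(f)(θ) = ∫₀^{π/2} f(θ·sin²s) ds is injective on real-analytic functions). -/

import Mathlib

open MeasureTheory intervalIntegral
open scoped ENNReal NNReal

lemma Wpos (n : ℕ) : 0 < ∫ s in (0:ℝ)..(Real.pi/2), Real.sin s ^ n := by
  apply intervalIntegral.intervalIntegral_pos_of_pos_on
  · exact (Real.continuous_sin.pow n).intervalIntegrable _ _
  · intro x hx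
    exact pow_pos (Real.sin_pos_of_pos_of_lt_pi hx.1 (lt_trans hx.2 (by
      have := Real.pi_pos; linarith))) n
  · positivity

lemma Wle (n : ℕ) : (∫ s in (0:ℝ)..(Real.pi/2), Real.sin s ^ n) ≤ Real.pi/2 := by
  have h : (Real.pi/2 : ℝ) = ∫ s in (0:ℝ)..(Real.pi/2), (1:ℝ) := by simp
  conv_rhs => rw [h]
  apply intervalIntegral.integral_mono_on (by positivity)
    ((Real.continuous_sin.pow n).intervalIntegrable _ _)
    (intervalIntegrable_const)
  intro x hx
  calc Real.sin x ^ n ≤ |Real.sin x ^ n| := le_abs_self _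
      _ = |Real.sin x| ^ n := abs_pow _ _
      _ ≤ 1 := pow_le_one₀ (abs_nonneg _) (Real.abs_sin_le_one x)

lemma swap_int {f : ℝ → ℝ} {p : FormalMultilinearSeries ℝ ℝ ℝ} {r : ℝ≥0∞}
    (hp : HasFPowerSeriesOnBall f p 0 r) {y : ℝ} (hy : (‖y‖₊ : ℝ≥0∞) < r) :
    (∫ s in (0:ℝ)..(Real.pi/2), f (y * Real.sin s ^ 2))
      = ∑' n : ℕ, (p.coeff n * y ^ n) *
          ∫ s in (0:ℝ)..(Real.pi/2), Real.sin s ^ (2*n) := by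
  have hy' : (‖y‖₊ : ℝ≥0∞) < p.radius := lt_of_lt_of_le hy hp.r_le
  have hS : Summable fun n => ‖p n‖ * ‖y‖ ^ n := by
    simpa using p.summable_norm_mul_pow hy'
  have hle : (0:ℝ) ≤ Real.pi/2 := by positivity
  have hpt : ∀ s : ℝ, f (y * Real.sin s ^ 2)
      = ∑' n : ℕ, p.coeff n * (y * Real.sin s ^ 2) ^ n := by
    intro s
    have hmem : (y * Real.sin s ^ 2) ∈ Metric.eball (0:ℝ) r := by
      rw [mem_emetric_ball_zero_iff]
      refine lt_of_le_of_lt ?_ hy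
      rw [enorm_eq_nnnorm, ENNReal.coe_le_coe, ← NNReal.coe_le_coe]
      simp only [coe_nnnorm, Real.norm_eq_abs, abs_mul, abs_pow]
      calc |y| * |Real.sin s| ^ 2 ≤ |y| * 1 := by
            gcongr
            exact pow_le_one₀ (abs_nonneg _) (Real.abs_sin_le_one s)
        _ = |y| := mul_one _
    have hsum := hp.hasSum hmem
    simp only [FormalMultilinearSeries.apply_eq_pow_smul_coeff, smul_eq_mul,
      zero_add] at hsum
    rw [← hsum.tsum_eq]
    exact tsum_congr fun n => (mul_comm _ _)
  rw [intervalIntegral.integral_of_le hle]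
  have hmeasint : ∀ n : ℕ, AEStronglyMeasurable
      (fun s : ℝ => p.coeff n * (y * Real.sin s ^ 2) ^ n)
      (volume.restrict (Set.Ioc 0 (Real.pi/2))) := fun n =>
    (continuous_const.mul ((continuous_const.mul (Real.continuous_sin.pow 2)).pow n)).aestronglyMeasurable
  have hfin : (∑' n : ℕ, ∫⁻ s in Set.Ioc (0:ℝ) (Real.pi/2),
      ‖p.coeff n * (y * Real.sin s ^ 2) ^ n‖₊) ≠ ⊤ := by
    have hb : ∀ n : ℕ, (∫⁻ s in Set.Ioc (0:ℝ) (Real.pi/2),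
        ‖p.coeff n * (y * Real.sin s ^ 2) ^ n‖₊)
        ≤ ((‖p n‖₊ * ‖y‖₊ ^ n : ℝ≥0) : ℝ≥0∞) * ENNReal.ofReal (Real.pi/2) := by
      intro n
      have hpw : ∀ s : ℝ, (‖p.coeff n * (y * Real.sin s ^ 2) ^ n‖₊ : ℝ≥0∞)
          ≤ ((‖p n‖₊ * ‖y‖₊ ^ n : ℝ≥0) : ℝ≥0∞) := by
        intro s
        rw [ENNReal.coe_le_coe]
        have h1 : ‖p.coeff n * (y * Real.sin s ^ 2) ^ n‖ ≤ ‖p n‖ * ‖y‖ ^ n := by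
          rw [norm_mul, norm_pow, norm_mul, p.norm_apply_eq_norm_coef]
          have h2 : ‖y‖ * ‖Real.sin s ^ 2‖ ≤ ‖y‖ * 1 := by
            gcongr
            simp only [Real.norm_eq_abs, abs_pow]
            exact pow_le_one₀ (abs_nonneg _) (Real.abs_sin_le_one s)
          rw [mul_one] at h2
          gcongr
        rw [← NNReal.coe_le_coe]
        simpa using h1
      calc (∫⁻ s in Set.Ioc (0:ℝ) (Real.pi/2), ‖p.coeff n * (y * Real.sin s ^ 2) ^ n‖₊)
          ≤ ∫⁻ _ in Set.Ioc (0:ℝ) (Real.pi/2), ((‖p n‖₊ * ‖y‖₊ ^ n : ℝ≥0) : ℝ≥0∞) :=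
            MeasureTheory.lintegral_mono fun s => hpw s
        _ = ((‖p n‖₊ * ‖y‖₊ ^ n : ℝ≥0) : ℝ≥0∞) * ENNReal.ofReal (Real.pi/2) := by
            rw [MeasureTheory.lintegral_const, Measure.restrict_apply_univ,
              Real.volume_Ioc, sub_zero]
    refine ne_top_of_le_ne_top ?_ (ENNReal.tsum_le_tsum hb)
    rw [ENNReal.tsum_mul_right]
    apply ENNReal.mul_ne_top _ (ENNReal.ofReal_ne_top)
    rw [ENNReal.tsum_coe_ne_top_iff_summable]
    rw [← NNReal.summable_coe]
    simpa using hS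
  calc (∫ s in Set.Ioc (0:ℝ) (Real.pi/2), f (y * Real.sin s ^ 2))
      = ∫ s in Set.Ioc (0:ℝ) (Real.pi/2),
          ∑' n : ℕ, p.coeff n * (y * Real.sin s ^ 2) ^ n := by
        exact integral_congr_ae (Filter.Eventually.of_forall fun s => hpt s)
    _ = ∑' n : ℕ, ∫ s in Set.Ioc (0:ℝ) (Real.pi/2),
          p.coeff n * (y * Real.sin s ^ 2) ^ n :=
        MeasureTheory.integral_tsum hmeasint hfin
    _ = ∑' n : ℕ, (p.coeff n * y ^ n) *
          ∫ s in (0:ℝ)..(Real.pi/2), Real.sin s ^ (2*n) := by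
        refine tsum_congr fun n => ?_
        rw [← intervalIntegral.integral_of_le hle, ← intervalIntegral.integral_const_mul]
        refine intervalIntegral.integral_congr fun s _ => ?_
        rw [mul_pow, pow_mul]
        ring

/-- the operator `A(f)(θ) = ∫₀^{π/2} f(θ sin²s) ds` is injective on
real-analytic functions. -/
theorem stmt12 (f : ℝ → ℝ) (hf : ∀ x : ℝ, AnalyticAt ℝ f x)
    (h : ∀ θ : ℝ, (∫ s in (0:ℝ)..(Real.pi/2), f (θ * Real.sin s ^ 2)) = 0) :
    ∀ θ : ℝ, f θ = 0 := by
  obtain ⟨p, hp0⟩ := hf 0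
  obtain ⟨r, hp⟩ := hp0
  -- the scaled series
  set q : FormalMultilinearSeries ℝ ℝ ℝ :=
    fun n => (∫ s in (0:ℝ)..(Real.pi/2), Real.sin s ^ (2*n)) • p n with hq
  have hqn : ∀ n, ‖q n‖ = (∫ s in (0:ℝ)..(Real.pi/2), Real.sin s ^ (2*n)) * ‖p n‖ := by
    intro n
    show ‖(∫ s in (0:ℝ)..(Real.pi/2), Real.sin s ^ (2*n)) • p n‖ = _
    rw [norm_smul _ (p n), Real.norm_eq_abs, abs_of_pos (Wpos (2*n))]
  have key : HasFPowerSeriesOnBall (fun _ : ℝ => (0:ℝ)) q 0 r := by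
    refine ⟨?_, hp.r_pos, ?_⟩
    · apply ENNReal.le_of_forall_nnreal_lt
      intro r' hr'
      apply q.le_radius_of_summable
      have hS : Summable fun n => ‖p n‖ * (r' : ℝ) ^ n :=
        p.summable_norm_mul_pow (lt_of_lt_of_le hr' hp.r_le)
      apply Summable.of_nonneg_of_le (fun n => by positivity)
        (fun n => ?_) (hS.mul_left (Real.pi/2))
      rw [hqn]
      calc (∫ s in (0:ℝ)..(Real.pi/2), Real.sin s ^ (2*n)) * ‖p n‖ * (r':ℝ) ^ n
          ≤ (Real.pi/2) * ‖p n‖ * (r':ℝ) ^ n := by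
            gcongr
            exact Wle (2*n)
        _ = Real.pi/2 * (‖p n‖ * (r':ℝ) ^ n) := by ring
    · intro y hy
      rw [mem_emetric_ball_zero_iff] at hy
      have hS : Summable fun n => ‖p n‖ * ‖y‖ ^ n := by
        simpa using p.summable_norm_mul_pow (lt_of_lt_of_le hy hp.r_le)
      have hsummable : Summable fun n : ℕ =>
          (∫ s in (0:ℝ)..(Real.pi/2), Real.sin s ^ (2*n)) • ((y:ℝ) ^ n • p.coeff n) := by
        apply Summable.of_norm_bounded (hS.mul_left (Real.pi/2))
        intro n
        rw [smul_eq_mul, smul_eq_mul, norm_mul, norm_mul, Real.norm_eq_abs,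
          abs_of_pos (Wpos (2*n)), p.norm_apply_eq_norm_coef, norm_pow]
        calc (∫ s in (0:ℝ)..(Real.pi/2), Real.sin s ^ (2*n)) * (‖y‖ ^ n * ‖p.coeff n‖)
            ≤ (Real.pi/2) * (‖y‖ ^ n * ‖p.coeff n‖) := by
              gcongr
              exact Wle (2*n)
          _ = Real.pi/2 * (‖p.coeff n‖ * ‖y‖ ^ n) := by ring
      have htsum : (∑' n : ℕ,
          (∫ s in (0:ℝ)..(Real.pi/2), Real.sin s ^ (2*n)) • ((y:ℝ) ^ n • p.coeff n)) = 0 := by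
        have hsw := swap_int hp hy
        rw [h y] at hsw
        calc (∑' n : ℕ,
            (∫ s in (0:ℝ)..(Real.pi/2), Real.sin s ^ (2*n)) • ((y:ℝ) ^ n • p.coeff n))
            = ∑' n : ℕ, (p.coeff n * y ^ n) *
                ∫ s in (0:ℝ)..(Real.pi/2), Real.sin s ^ (2*n) := by
              refine tsum_congr fun n => ?_
              simp only [smul_eq_mul]; ring
          _ = 0 := hsw.symm
      have : (fun n : ℕ => q n fun _ => y) = fun n : ℕ =>
          (∫ s in (0:ℝ)..(Real.pi/2), Real.sin s ^ (2*n)) • ((y:ℝ) ^ n • p.coeff n) := by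
        funext n
        rw [hq]
        simp [FormalMultilinearSeries.apply_eq_pow_smul_coeff, smul_comm]
      rw [this]
      exact (Summable.hasSum_iff hsummable).mpr htsum
  have hq0 : q = 0 := HasFPowerSeriesAt.eq_zero ⟨r, key⟩
  have hpc : ∀ n, p n = 0 := by
    intro n
    have : q n = 0 := by rw [hq0]; rfl
    rw [hq] at this
    exact (smul_eq_zero.mp this).resolve_left (ne_of_gt (Wpos (2*n)))
  have hp0' : p = 0 := by funext n; exact hpc n
  have hev : f =ᶠ[nhds (0:ℝ)] 0 := by
    filter_upwards [Metric.eball_mem_nhds (0:ℝ) hp.r_pos] with z hz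
    have hsz := hp.hasSum hz
    rw [hp0'] at hsz
    have h2 : HasSum (fun _ : ℕ => (0:ℝ)) (f (0 + z)) := by simpa using hsz
    have h3 := h2.unique hasSum_zero
    simpa using h3
  intro θ
  have := AnalyticOnNhd.eqOn_zero_of_preconnected_of_eventuallyEq_zero
    (fun x _ => hf x) isPreconnected_univ (Set.mem_univ (0:ℝ)) hev
  exact this (Set.mem_univ θ)
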